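/- Let $d^k\in\mathbb{R}^{A_1}_+$ for $k\in N_1$ be defined by $d^k_{ij}=1$ if $i=k$ and $d^k_{ij}=0$ otherwise. Then $\bigcap_{k\in N_1}P_{\mathrm{MTZ}}(d^k)=\{x\in P_{\mathrm{AP}} : \sum_{ij\in C}x_{ij}\le|C|-1\ \text{for all}\ C\in\mathcal{C}_1\}$; moreover this set equals $\bigcap_{d\in D}P_{\mathrm{MTZ}}(d)$, the closure of all $d$-MTZ formulations. -/

import Mathlib

/-- Weight of a directed cycle given by nodes `v 0, …, v (k-1)` with arcs
`(v i, v ((i+1) % k))`. -/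
def cycleSum {α : Type} (c : α → α → ℝ) (k : ℕ) (v : ℕ → α) : ℝ :=
  ∑ i ∈ Finset.range k, c (v i) (v ((i + 1) % k))

/-- A directed cycle: at least two distinct nodes `v 0, …, v (k-1)`. -/
def IsCycle {α : Type} (k : ℕ) (v : ℕ → α) : Prop :=
  2 ≤ k ∧ ∀ i < k, ∀ j < k, v i = v j → i = j

/-- A directed cycle avoiding node `0` (the paper's node 1), i.e. a member of `𝒞₁`. -/
def IsCycle1 {n : ℕ} (k : ℕ) (v : ℕ → Fin (n + 1)) : Prop :=
  IsCycle k v ∧ ∀ i < k, v i ≠ 0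

/-- The (restricted) assignment polytope `P_AP`. -/
def memPAP {n : ℕ} (x : Fin (n + 1) → Fin (n + 1) → ℝ) : Prop :=
  (∀ i j : Fin (n + 1), i ≠ j → 0 ≤ x i j ∧ x i j ≤ 1) ∧
  (∀ i : Fin (n + 1), ∑ j ∈ Finset.univ.erase i, x i j = 1) ∧
  (∀ i : Fin (n + 1), ∑ j ∈ Finset.univ.erase i, x j i = 1)

/-- Membership in `P_MTZ(d)`: the projection of the `d`-MTZ relaxation. -/
def memPMTZ {n : ℕ} (d x : Fin (n + 1) → Fin (n + 1) → ℝ) : Prop :=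
  memPAP x ∧ ∀ (k : ℕ) (v : ℕ → Fin (n + 1)), IsCycle1 k v →
    cycleSum x k v ≤ (k : ℝ) - cycleSum d k v

/-- Membership in `D` (strictly positive parameters). -/
def memD {n : ℕ} (d : Fin (n + 1) → Fin (n + 1) → ℝ) : Prop :=
  (∀ i j : Fin (n + 1), i ≠ 0 → j ≠ 0 → i ≠ j → 0 < d i j) ∧
  ∀ (k : ℕ) (v : ℕ → Fin (n + 1)), IsCycle1 k v → cycleSum d k v ≤ 1

lemma succ_mod_ne {m i : ℕ} (h2 : 2 ≤ m) (hi : i < m) : (i + 1) % m ≠ i := by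
  rcases Nat.lt_or_ge (i + 1) m with h | h
  · rw [Nat.mod_eq_of_lt h]; omega
  · have : i + 1 = m := by omega
    rw [this, Nat.mod_self]; omega

/-- In `P_AP`, each arc of a cycle has weight at most 1. -/
lemma cycleSum_le_card {n : ℕ} {x : Fin (n + 1) → Fin (n + 1) → ℝ} (hx : memPAP x)
    {m : ℕ} {v : ℕ → Fin (n + 1)} (hv : IsCycle1 m v) :
    cycleSum x m v ≤ (m : ℝ) := by
  obtain ⟨⟨h2, hinj⟩, _⟩ := hv
  calc cycleSum x m v ≤ ∑ _i ∈ Finset.range m, (1 : ℝ) := by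
        apply Finset.sum_le_sum
        intro i hi
        simp only [Finset.mem_range] at hi
        have hne : v i ≠ v ((i + 1) % m) := fun h =>
          succ_mod_ne h2 hi (hinj _ (Nat.mod_lt _ (by omega)) _ hi h.symm)
        exact (hx.1 _ _ hne).2
    _ = m := by simp

lemma cycleSum_dk {n : ℕ} (k : Fin (n + 1)) (m : ℕ) (v : ℕ → Fin (n + 1)) :
    cycleSum (fun i _ => if i = k then (1 : ℝ) else 0) m v
      = ∑ i ∈ Finset.range m, (if v i = k then (1 : ℝ) else 0) := rfl

lemma cycleSum_dk_le_one {n : ℕ} {m : ℕ} {v : ℕ → Fin (n + 1)} (hv : IsCycle1 m v)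
    (k : Fin (n + 1)) :
    cycleSum (fun i _ => if i = k then (1 : ℝ) else 0) m v ≤ 1 := by
  rw [cycleSum_dk, Finset.sum_boole]
  have : ((Finset.range m).filter (fun i => v i = k)).card ≤ 1 := by
    apply Finset.card_le_one.mpr
    intro a ha b hb
    simp only [Finset.mem_filter, Finset.mem_range] at ha hb
    exact hv.1.2 a ha.1 b hb.1 (ha.2.trans hb.2.symm)
  exact_mod_cast this

lemma one_le_cycleSum_dk {n : ℕ} {m : ℕ} {v : ℕ → Fin (n + 1)} (hm : 0 < m) :
    1 ≤ cycleSum (fun i _ => if i = v 0 then (1 : ℝ) else 0) m v := by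
  rw [cycleSum_dk]
  have h0 : (if v 0 = v 0 then (1 : ℝ) else 0) = 1 := by simp
  calc (1 : ℝ) = if v 0 = v 0 then (1 : ℝ) else 0 := h0.symm
    _ ≤ _ := Finset.single_le_sum (f := fun i => if v i = v 0 then (1 : ℝ) else 0)
        (fun i _ => by split <;> norm_num) (Finset.mem_range.mpr hm)

lemma cycle_len_le {n : ℕ} {m : ℕ} {v : ℕ → Fin (n + 1)} (hv : IsCycle1 m v) : m ≤ n := by
  have := Finset.card_le_card_of_injOn v
    (s := Finset.range m) (t := Finset.univ.erase (0 : Fin (n + 1)))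
    (fun a ha => Finset.mem_erase.mpr ⟨hv.2 a (Finset.mem_range.mp ha), Finset.mem_univ _⟩)
    (fun a ha b hb h => hv.1.2 a (Finset.mem_range.mp ha) b (Finset.mem_range.mp hb) h)
  simpa using this

lemma cycleSum_comb {n : ℕ} (c e : ℝ) (k : Fin (n + 1)) (m : ℕ) (v : ℕ → Fin (n + 1)) :
    cycleSum (fun i _ => c * (if i = k then (1 : ℝ) else 0) + e) m v
      = c * cycleSum (fun i _ => if i = k then (1 : ℝ) else 0) m v + m * e := by
  simp only [cycleSum, Finset.sum_add_distrib, Finset.sum_const, Finset.card_range,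
    nsmul_eq_mul, Finset.mul_sum, mul_ite, mul_one, mul_zero]

/-- The intersection of the formulations `P_MTZ(dᵏ)`, where `dᵏ_{ij} = 1` iff `i = k`,
equals the set cut out by the circuit inequalities, and this set is the closure
`⋂_{d ∈ D} P_MTZ(d)`. -/
theorem stmt_11 (n : ℕ) (hn : 4 ≤ n + 1) (x : Fin (n + 1) → Fin (n + 1) → ℝ) :
    ((∀ k : Fin (n + 1), k ≠ 0 →
        memPMTZ (fun i _ => if i = k then (1 : ℝ) else 0) x)
      ↔ (memPAP x ∧ ∀ (m : ℕ) (v : ℕ → Fin (n + 1)), IsCycle1 m v →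
          cycleSum x m v ≤ (m : ℝ) - 1)) ∧
    ((∀ k : Fin (n + 1), k ≠ 0 →
        memPMTZ (fun i _ => if i = k then (1 : ℝ) else 0) x)
      ↔ ∀ d : Fin (n + 1) → Fin (n + 1) → ℝ, memD d → memPMTZ d x) := by

  have hn3 : 3 ≤ n := by omega
  -- the circuit-inequality characterization
  have main : (∀ k : Fin (n + 1), k ≠ 0 →
        memPMTZ (fun i _ => if i = k then (1 : ℝ) else 0) x)
      ↔ (memPAP x ∧ ∀ (m : ℕ) (v : ℕ → Fin (n + 1)), IsCycle1 m v →
          cycleSum x m v ≤ (m : ℝ) - 1) := by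
    constructor
    · intro H
      have h1ne : (1 : Fin (n + 1)) ≠ 0 := by
        have h1 : (1 : Fin (n + 1)).val = 1 := by
          rw [Fin.val_one']; exact Nat.mod_eq_of_lt (by omega)
        intro h
        rw [h] at h1
        simp at h1
      have hPAP : memPAP x := (H 1 h1ne).1
      refine ⟨hPAP, fun m v hv => ?_⟩
      have hv0 : v 0 ≠ 0 := hv.2 0 (by have := hv.1.1; omega)
      have := (H (v 0) hv0).2 m v hv
      have h1 := one_le_cycleSum_dk (v := v) (m := m) (by have := hv.1.1; omega)
      linarith
    · rintro ⟨hPAP, hcirc⟩ k hk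
      refine ⟨hPAP, fun m v hv => ?_⟩
      have hle1 := cycleSum_dk_le_one hv k
      have := hcirc m v hv
      linarith
  refine ⟨main, main.trans ⟨?_, ?_⟩⟩
  · rintro ⟨hPAP, hcirc⟩ d hd
    refine ⟨hPAP, fun m v hv => ?_⟩
    have := hd.2 m v hv
    have := hcirc m v hv
    linarith
  · intro H
    have hnpos : (0 : ℝ) < n := by positivity
    -- the uniform d is in D
    have huni : memD (n := n) (fun _ _ => 1 / n) := by
      refine ⟨fun i j _ _ _ => by positivity, fun m v hv => ?_⟩
      have hm : (m : ℝ) ≤ n := by exact_mod_cast cycle_len_le hv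
      have hnpos : (0 : ℝ) < n := by positivity
      have hcs : cycleSum (fun (_ _ : Fin (n + 1)) => (1 : ℝ) / n) m v = m / n := by
        simp [cycleSum, Finset.sum_const, Finset.card_range, mul_one_div,
          div_eq_mul_inv]
      rw [hcs, div_le_one hnpos]
      exact hm
    have hPAP : memPAP x := (H _ huni).1
    refine ⟨hPAP, fun m v hv => ?_⟩
    -- limit argument in ε
    have key : ∀ ε : ℝ, 0 < ε → ε ≤ 1 → cycleSum x m v ≤ (m : ℝ) - 1 + ε := by
      intro ε hε hε1
      set d : Fin (n + 1) → Fin (n + 1) → ℝ :=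
        fun i j => (1 - ε) * (if i = v 0 then (1 : ℝ) else 0) + ε / n with hd
      have hdD : memD d := by
        constructor
        · intro i j _ _ _
          have : (0 : ℝ) ≤ (1 - ε) * (if i = v 0 then (1 : ℝ) else 0) := by
            have : (0:ℝ) ≤ (1 - ε) := by linarith
            positivity
          have h2 : (0 : ℝ) < ε / n := by positivity
          simp only [hd]; linarith
        · intro m' v' hv'
          rw [hd, cycleSum_comb]
          have hs := cycleSum_dk_le_one hv' (v 0)
          have hm' : (m' : ℝ) ≤ n := by exact_mod_cast cycle_len_le hv'
          have h1 : (m' : ℝ) * (ε / n) ≤ ε := by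
            rw [mul_div_assoc'] -- (m' * ε) / n
            rw [div_le_iff₀ hnpos]
            nlinarith
          nlinarith [cycleSum_dk_le_one hv' (v 0)]
      have := (H d hdD).2 m v hv
      rw [hd, cycleSum_comb] at this
      have h1 := one_le_cycleSum_dk (v := v) (m := m) (by have := hv.1.1; omega)
      have h2 : (0 : ℝ) ≤ (m : ℝ) * (ε / n) := by positivity
      nlinarith
    have : cycleSum x m v ≤ ((m : ℝ) - 1) := by
      apply le_of_forall_pos_le_add
      intro ε hε
      rcases le_or_gt ε 1 with h | h
      · exact key ε hε h
      · have := key 1 one_pos le_rfl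
        linarith
    exact this
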